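/- Follow-the-Leader is an optimal prediction rule: fix K ≥ 1, T ≥ 1 and ε ∈ (0, 1/2). For every prediction rule p : Ω → ℝ^K (with p_k(ω) ≥ 0 and ∑_{k=1}^K p_k(ω) = 1 for every ω), one has ∑_{j=1}^K E_{P_j}[p_j(ω)] ≤ ∑_{j=1}^K P_j{FTL(ω) = j}. -/

import Mathlib

open MeasureTheory

/-- The Bernoulli measure on `Bool` with success probability `p` (for `p ∈ [0,1]`). -/
noncomputable def bern (p : ℝ) : Measure Bool :=
  (PMF.bernoulli (min (Real.toNNReal p) 1) (min_le_right _ _)).toMeasure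

/-- The lower-bound instance `I_j`: the product measure on `K × T` reward matrices
under which all entries are independent, entries of row `j` are Bernoulli((1+ε)/2),
and entries of every other row are Bernoulli(1/2). -/
noncomputable def lowerP (K T : ℕ) (ε : ℝ) (j : Fin K) :
    Measure (Fin K → Fin T → Bool) :=
  Measure.pi fun k => Measure.pi fun _ : Fin T =>
    bern (if k = j then (1 + ε) / 2 else 1 / 2)

/-- The number of wins `w_k(ω) = #{t : ω_{k,t} = 1}` of arm `k`. -/
def wins {K T : ℕ} (ω : Fin K → Fin T → Bool) (k : Fin K) : ℕ :=
  (Finset.univ.filter fun t : Fin T => ω k t = true).card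

instance bern_prob (q : ℝ) : IsProbabilityMeasure (bern q) :=
  PMF.toMeasure.isProbabilityMeasure _

lemma bern_singleton {q : ℝ} (hq0 : 0 ≤ q) (hq1 : q ≤ 1) (b : Bool) :
    bern q {b} = ENNReal.ofReal (cond b q (1 - q)) := by
  have hmin : min (Real.toNNReal q) 1 = Real.toNNReal q :=
    min_eq_left (Real.toNNReal_le_one.mpr hq1)
  rw [bern, PMF.toMeasure_apply_singleton _ _ (measurableSet_singleton b),
    PMF.bernoulli_apply, hmin]
  cases b with
  | false => simp [ENNReal.ofReal_sub _ hq0]; rfl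
  | true => rfl

lemma row_prod {T : ℕ} {q : ℝ} (hq0 : 0 ≤ q) (hq1 : q ≤ 1) (r : Fin T → Bool) :
    (Measure.pi fun _ : Fin T => bern q) {r}
      = (ENNReal.ofReal q) ^ (Finset.univ.filter fun t => r t = true).card
        * (ENNReal.ofReal (1 - q)) ^ (T - (Finset.univ.filter fun t => r t = true).card) := by
  classical
  rw [← Set.univ_pi_singleton, Measure.pi_pi]
  simp_rw [bern_singleton hq0 hq1]
  rw [← Finset.prod_filter_mul_prod_filter_not Finset.univ (fun t => r t = true)]
  have h1 : ∀ t ∈ Finset.univ.filter fun t : Fin T => r t = true,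
      ENNReal.ofReal (cond (r t) q (1 - q)) = ENNReal.ofReal q := by
    intro t ht; rw [Finset.mem_filter] at ht; rw [ht.2]; rfl
  have h2 : ∀ t ∈ Finset.univ.filter fun t : Fin T => ¬ (r t = true),
      ENNReal.ofReal (cond (r t) q (1 - q)) = ENNReal.ofReal (1 - q) := by
    intro t ht; rw [Finset.mem_filter] at ht
    rw [Bool.not_eq_true] at ht; rw [ht.2]; rfl
  rw [Finset.prod_congr rfl h1, Finset.prod_congr rfl h2, Finset.prod_const,
    Finset.prod_const]
  congr 1
  congr 1
  have := Finset.card_filter_add_card_filter_not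
    (s := (Finset.univ : Finset (Fin T))) (p := fun t => r t = true)
  simp only [Finset.card_univ, Fintype.card_fin] at this
  omega

lemma lowerP_singleton {K T : ℕ} {ε : ℝ} (hε0 : 0 ≤ ε) (hε1 : ε ≤ 1)
    (j : Fin K) (ω : Fin K → Fin T → Bool) :
    lowerP K T ε j {ω}
      = ((ENNReal.ofReal ((1 + ε) / 2)) ^ (wins ω j)
          * (ENNReal.ofReal ((1 - ε) / 2)) ^ (T - wins ω j))
        * ((ENNReal.ofReal (1 / 2 : ℝ)) ^ T) ^ (K - 1) := by
  classical
  rw [lowerP, ← Set.univ_pi_singleton, Measure.pi_pi]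
  have hrow : ∀ k : Fin K,
      (Measure.pi fun _ : Fin T => bern (if k = j then (1 + ε) / 2 else 1 / 2)) {ω k}
        = if k = j then
            (ENNReal.ofReal ((1 + ε) / 2)) ^ (wins ω k)
              * (ENNReal.ofReal ((1 - ε) / 2)) ^ (T - wins ω k)
          else (ENNReal.ofReal (1 / 2 : ℝ)) ^ T := by
    intro k
    by_cases hk : k = j
    · simp only [hk, if_true]
      have := row_prod (T := T) (q := (1 + ε) / 2) (by linarith) (by linarith) (ω j)
      rw [this]
      have : (1 : ℝ) - (1 + ε) / 2 = (1 - ε) / 2 := by ring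
      rw [this]; rfl
    · simp only [hk, if_false]
      have := row_prod (T := T) (q := (1 / 2 : ℝ)) (by norm_num) (by norm_num) (ω k)
      rw [this]
      have h2 : (1 : ℝ) - 1 / 2 = 1 / 2 := by norm_num
      rw [h2, ← pow_add]
      congr 1
      have : (Finset.univ.filter fun t => ω k t = true).card ≤ T := by
        simpa using (Finset.card_filter_le Finset.univ fun t : Fin T => ω k t = true)
      omega
  rw [Finset.prod_congr rfl fun k _ => hrow k,
    ← Finset.mul_prod_erase Finset.univ _ (Finset.mem_univ j), if_pos rfl]
  congr 1
  rw [Finset.prod_congr rfl fun k hk => if_neg (Finset.ne_of_mem_erase hk),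
    Finset.prod_const, Finset.card_erase_of_mem (Finset.mem_univ j), Finset.card_univ,
    Fintype.card_fin]


/-- The Follow-the-Leader prediction: the smallest index maximizing `w_k(ω)`. -/
noncomputable def FTL {K T : ℕ} [NeZero K] (ω : Fin K → Fin T → Bool) : Fin K :=
  (Finset.univ.filter fun k : Fin K => ∀ k', wins ω k' ≤ wins ω k).min' (by
    obtain ⟨b, -, hb⟩ :=
      Finset.exists_max_image Finset.univ (wins ω) Finset.univ_nonempty
    exact ⟨b, Finset.mem_filter.mpr
      ⟨Finset.mem_univ b, fun k' => hb k' (Finset.mem_univ k')⟩⟩)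

instance lowerP_prob (K T : ℕ) (ε : ℝ) (j : Fin K) :
    IsProbabilityMeasure (lowerP K T ε j) := by
  unfold lowerP; infer_instance

lemma wins_le_FTL {K T : ℕ} [NeZero K] (ω : Fin K → Fin T → Bool) (k : Fin K) :
    wins ω k ≤ wins ω (FTL ω) := by
  have h := Finset.min'_mem (Finset.univ.filter fun k : Fin K =>
    ∀ k', wins ω k' ≤ wins ω k) (by
      obtain ⟨b, -, hb⟩ :=
        Finset.exists_max_image Finset.univ (wins ω) Finset.univ_nonempty
      exact ⟨b, Finset.mem_filter.mpr
        ⟨Finset.mem_univ b, fun k' => hb k' (Finset.mem_univ k')⟩⟩)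
  exact (Finset.mem_filter.mp h).2 k

lemma wins_le_T {K T : ℕ} (ω : Fin K → Fin T → Bool) (k : Fin K) : wins ω k ≤ T := by
  simpa [wins] using (Finset.card_filter_le Finset.univ fun t : Fin T => ω k t = true)

lemma lowerP_singleton_mono {K T : ℕ} [NeZero K] {ε : ℝ} (hε0 : 0 ≤ ε) (hε1 : ε ≤ 1)
    (j : Fin K) (ω : Fin K → Fin T → Bool) :
    lowerP K T ε j {ω} ≤ lowerP K T ε (FTL ω) {ω} := by
  rw [lowerP_singleton hε0 hε1, lowerP_singleton hε0 hε1]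
  apply mul_le_mul_left
  set x := ENNReal.ofReal ((1 + ε) / 2)
  set y := ENNReal.ofReal ((1 - ε) / 2)
  have hyx : y ≤ x := ENNReal.ofReal_le_ofReal (by linarith)
  set n := wins ω j
  set m := wins ω (FTL ω)
  have hnm : n ≤ m := wins_le_FTL ω j
  have hmT : m ≤ T := wins_le_T ω _
  have hsplit : T - n = (m - n) + (T - m) := by omega
  calc x ^ n * y ^ (T - n) = x ^ n * (y ^ (m - n) * y ^ (T - m)) := by
        rw [hsplit, pow_add]
    _ ≤ x ^ n * (x ^ (m - n) * y ^ (T - m)) := by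
        exact mul_le_mul_right (mul_le_mul_left (pow_le_pow_left' hyx _) _) _
    _ = x ^ m * y ^ (T - m) := by rw [← mul_assoc, ← pow_add]; congr 2; omega


/-- **Follow-the-Leader is an optimal prediction rule.** For every `K ≥ 1`, `T ≥ 1`,
`ε ∈ (0, 1/2)` and every prediction rule `p`,
`∑_j E_{P_j}[p_j(ω)] ≤ ∑_j P_j{FTL(ω) = j}`. -/
theorem FTL_optimal
    (K T : ℕ) [NeZero K] (hT : 1 ≤ T)
    (ε : ℝ) (hε : 0 < ε) (hε2 : ε < 1 / 2)
    (p : (Fin K → Fin T → Bool) → Fin K → ℝ)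
    (hp0 : ∀ ω k, 0 ≤ p ω k) (hp1 : ∀ ω, ∑ k, p ω k = 1) :
    (∑ j, ∫ ω, p ω j ∂(lowerP K T ε j))
      ≤ ∑ j, ((lowerP K T ε j) {ω | FTL ω = j}).toReal := by
  classical
  have hInt : ∀ j : Fin K, ∫ ω, p ω j ∂(lowerP K T ε j)
      = ∑ ω, ((lowerP K T ε j) {ω}).toReal • p ω j := fun j =>
    integral_fintype Integrable.of_finite
  -- rewrite RHS
  have hRHS : ∀ j : Fin K, ((lowerP K T ε j) {ω | FTL ω = j}).toReal
      = ∑ ω, (if FTL ω = j then ((lowerP K T ε j) {ω}).toReal else 0) := by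
    intro j
    have hms : MeasurableSet {ω : Fin K → Fin T → Bool | FTL ω = j} :=
      (Set.toFinite _).measurableSet
    rw [← Measure.tsum_indicator_apply_singleton _ _ hms, tsum_fintype,
      ENNReal.toReal_sum (fun ω _ => by
        by_cases h : FTL ω = j
        · rw [Set.indicator_of_mem (show ω ∈ {ω | FTL ω = j} from h)]; exact measure_ne_top _ _
        · rw [Set.indicator_of_notMem (show ω ∉ {ω | FTL ω = j} from h)]; exact ENNReal.zero_ne_top)]
    refine Finset.sum_congr rfl fun ω _ => ?_
    by_cases h : FTL ω = j
    · rw [Set.indicator_of_mem (show ω ∈ {ω | FTL ω = j} from h), if_pos h]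
    · rw [Set.indicator_of_notMem (show ω ∉ {ω | FTL ω = j} from h), if_neg h, ENNReal.toReal_zero]
  simp_rw [hInt, hRHS]
  rw [Finset.sum_comm, Finset.sum_comm (γ := Fin K)]
  refine Finset.sum_le_sum fun ω _ => ?_
  have hsum : ∑ j : Fin K, (if FTL ω = j then ((lowerP K T ε j) {ω}).toReal else 0)
      = ((lowerP K T ε (FTL ω)) {ω}).toReal := by
    rw [Finset.sum_ite_eq Finset.univ (FTL ω)
      (fun j => ((lowerP K T ε j) {ω}).toReal), if_pos (Finset.mem_univ _)]
  rw [hsum]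
  calc ∑ j : Fin K, ((lowerP K T ε j) {ω}).toReal • p ω j
      ≤ ∑ j : Fin K, ((lowerP K T ε (FTL ω)) {ω}).toReal • p ω j := by
        refine Finset.sum_le_sum fun j _ => ?_
        have hle : (lowerP K T ε j) {ω} ≤ (lowerP K T ε (FTL ω)) {ω} :=
          lowerP_singleton_mono hε.le (by linarith) j ω
        exact smul_le_smul_of_nonneg_right
          (ENNReal.toReal_le_toReal (measure_ne_top _ _) (measure_ne_top _ _) |>.mpr hle)
          (hp0 ω j)
    _ = ((lowerP K T ε (FTL ω)) {ω}).toReal := by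
        simp_rw [smul_eq_mul]
        rw [← Finset.mul_sum, hp1, mul_one]
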